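/- Let X be a unital Banach algebra and I a closed proper two-sided ideal of X. Then for every λ ≠ 0 and every S ∈ I, the element λ·1 + S is not a commutator: there do not exist A, B ∈ X with λ·1 + S = AB − BA. -/
import Mathlib

open Metric

/-- In a unital Banach algebra `X` with a closed proper two-sided ideal `I`, no element of
the form `λ·1 + S` with `λ ≠ 0` and `S ∈ I` is a commutator. -/
theorem smul_one_add_ideal_not_commutator {X : Type*} [NormedRing X] [NormedAlgebra ℂ X]
    [CompleteSpace X] [NormOneClass X] (I : TwoSidedIdeal X) (hIc : IsClosed (I : Set X))
    (hIp : I ≠ ⊤) :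
    ∀ lam : ℂ, lam ≠ 0 → ∀ S ∈ I, ¬ ∃ A B : X, lam • (1 : X) + S = A * B - B * A := by
  intro lam hlam S hS ⟨A, B, hAB⟩
  -- complex scalar multiples of ideal elements are in the ideal
  have smul_mem : ∀ (c : ℂ) {x : X}, x ∈ I → c • x ∈ I := by
    intro c x hx
    rw [Algebra.smul_def]
    exact I.mul_mem_left _ _ hx
  set A' : X := lam⁻¹ • A with hA'
  have hIne : (I : Set X).Nonempty := ⟨0, I.zero_mem⟩
  -- the quotient seminorm
  set q : X → ℝ := fun x => infDist x (I : Set X) with hq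
  have q_le : ∀ x : X, ∀ s ∈ I, q x ≤ ‖x - s‖ := by
    intro x s hs
    simpa [dist_eq_norm] using infDist_le_dist_of_mem (x := x) (SetLike.mem_coe.mpr hs)
  have le_q : ∀ (x : X) (r : ℝ), (∀ s ∈ I, r ≤ ‖x - s‖) → r ≤ q x := by
    intro x r h
    by_contra hlt
    push_neg at hlt
    obtain ⟨y, hy, hd⟩ := (infDist_lt_iff hIne).mp hlt
    exact absurd hd (not_lt.mpr (by simpa [dist_eq_norm] using h y hy))
  have q_nonneg : ∀ x : X, 0 ≤ q x := fun x => infDist_nonneg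
  -- q is invariant under adding an ideal element
  have q_add_mem_le : ∀ (x : X) {i : X}, i ∈ I → q (x + i) ≤ q x := by
    intro x i hi
    apply le_q
    intro s hs
    have h1 : q (x + i) ≤ ‖(x + i) - (s + i)‖ := q_le _ _ (I.add_mem hs hi)
    simpa [add_sub_add_right_eq_sub] using h1
  have q_congr : ∀ (x y : X), x - y ∈ I → q x = q y := by
    intro x y hxy
    have h1 : q x ≤ q y := by
      have := q_add_mem_le y hxy
      simpa using this
    have h2 : q y ≤ q x := by
      have := q_add_mem_le x (I.neg_mem hxy)
      simpa using this
    exact le_antisymm h1 h2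
  -- q (a * x) ≤ ‖a‖ * q x and symmetrically
  have q_zero : q 0 = 0 := infDist_zero_of_mem (SetLike.mem_coe.mpr I.zero_mem)
  have q_mul_left : ∀ a x : X, q (a * x) ≤ ‖a‖ * q x := by
    intro a x
    rcases eq_or_ne a 0 with rfl | ha
    · simp [q_zero]
    · have hna : (0:ℝ) < ‖a‖ := norm_pos_iff.mpr ha
      rw [← div_le_iff₀' hna]
      apply le_q
      intro s hs
      rw [div_le_iff₀' hna]
      calc q (a * x) ≤ ‖a * x - a * s‖ := q_le _ _ (I.mul_mem_left _ _ hs)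
        _ = ‖a * (x - s)‖ := by rw [mul_sub]
        _ ≤ ‖a‖ * ‖x - s‖ := norm_mul_le _ _
  have q_mul_right : ∀ a x : X, q (x * a) ≤ ‖a‖ * q x := by
    intro a x
    rcases eq_or_ne a 0 with rfl | ha
    · simp [q_zero]
    · have hna : (0:ℝ) < ‖a‖ := norm_pos_iff.mpr ha
      rw [← div_le_iff₀' hna]
      apply le_q
      intro s hs
      rw [div_le_iff₀' hna]
      calc q (x * a) ≤ ‖x * a - s * a‖ := q_le _ _ (I.mul_mem_right _ _ hs)
        _ = ‖(x - s) * a‖ := by rw [sub_mul]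
        _ ≤ ‖x - s‖ * ‖a‖ := norm_mul_le _ _
        _ = ‖a‖ * ‖x - s‖ := mul_comm _ _
  -- subadditivity on differences
  have q_sub : ∀ x y : X, q (x - y) ≤ q x + q y := by
    intro x y
    have inner : ∀ t ∈ I, q (x - y) - ‖y - t‖ ≤ q x := by
      intro t ht
      apply le_q
      intro s hs
      have h1 : q (x - y) ≤ ‖(x - y) - (s - t)‖ := q_le _ _ (I.sub_mem hs ht)
      have h2 : ‖(x - y) - (s - t)‖ = ‖(x - s) - (y - t)‖ := by congr 1; abel
      have h3 : ‖(x - s) - (y - t)‖ ≤ ‖x - s‖ + ‖y - t‖ := norm_sub_le _ _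
      linarith
    have outer : q (x - y) - q x ≤ q y := by
      apply le_q
      intro t ht
      linarith [inner t ht]
    linarith
  -- scaling from below
  have q_smul_ge : ∀ (c : ℂ) (x : X), c ≠ 0 → ‖c‖ * q x ≤ q (c • x) := by
    intro c x hc
    apply le_q
    intro s hs
    have hcs : c⁻¹ • s ∈ I := smul_mem _ hs
    calc ‖c‖ * q x ≤ ‖c‖ * ‖x - c⁻¹ • s‖ :=
          mul_le_mul_of_nonneg_left (q_le _ _ hcs) (norm_nonneg c)
      _ = ‖c • (x - c⁻¹ • s)‖ := (norm_smul c _).symm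
      _ = ‖c • x - s‖ := by rw [smul_sub, smul_inv_smul₀ hc]
  -- base commutator relation mod I : A' * B - B * A' - 1 ∈ I
  have hbase : A' * B - B * A' - 1 ∈ I := by
    have h1 : A' * B - B * A' = lam⁻¹ • (A * B - B * A) := by
      simp [hA', smul_mul_assoc, mul_smul_comm, smul_sub]
    have h2 : lam⁻¹ • (A * B - B * A) = 1 + lam⁻¹ • S := by
      rw [← hAB, smul_add, smul_smul, inv_mul_cancel₀ hlam, one_smul]
    have h3 : A' * B - B * A' - 1 = lam⁻¹ • S := by rw [h1, h2]; abel
    rw [h3]; exact smul_mem _ hS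
  -- inductive commutator relation
  have hcomm : ∀ n : ℕ, A' * B ^ (n+1) - B ^ (n+1) * A' - ((n+1 : ℕ) : ℂ) • B ^ n ∈ I := by
    intro n
    induction n with
    | zero => simpa using hbase
    | succ n ih =>
      have hm1 : (A' * B ^ (n+1) - B ^ (n+1) * A' - ((n+1 : ℕ) : ℂ) • B ^ n) * B ∈ I :=
        I.mul_mem_right _ _ ih
      have hm2 : B ^ (n+1) * (A' * B - B * A' - 1) ∈ I := I.mul_mem_left _ _ hbase
      have hsum := I.add_mem hm1 hm2
      have key : (A' * B ^ (n+1) - B ^ (n+1) * A') * B + B ^ (n+1) * (A' * B - B * A')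
          = A' * B ^ (n+2) - B ^ (n+2) * A' := by
        rw [pow_succ B (n+1)]
        noncomm_ring
      have hsm : (((n+1 : ℕ) : ℂ) • B ^ n) * B = ((n+1 : ℕ) : ℂ) • B ^ (n+1) := by
        rw [smul_mul_assoc, ← pow_succ]
      have hcast : ((n+2 : ℕ) : ℂ) • B ^ (n+1)
          = ((n+1 : ℕ) : ℂ) • B ^ (n+1) + B ^ (n+1) := by
        have : ((n+2 : ℕ) : ℂ) = ((n+1 : ℕ) : ℂ) + 1 := by push_cast; ring
        rw [this, add_smul, one_smul]
      have heq : (A' * B ^ (n+1) - B ^ (n+1) * A' - ((n+1 : ℕ) : ℂ) • B ^ n) * B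
          + B ^ (n+1) * (A' * B - B * A' - 1)
          = A' * B ^ (n+2) - B ^ (n+2) * A' - ((n+2 : ℕ) : ℂ) • B ^ (n+1) := by
        rw [sub_mul, hsm, mul_sub, mul_one, hcast, ← key]
        abel
      rw [heq] at hsum
      exact hsum
  -- no power of B lies in I
  have hpow : ∀ n : ℕ, B ^ n ∉ I := by
    intro n
    induction n with
    | zero =>
      intro h
      exact hIp (I.one_mem_iff.mp (by simpa using h))
    | succ n ih =>
      intro h
      have h1 : A' * B ^ (n+1) - B ^ (n+1) * A' ∈ I :=
        I.sub_mem (I.mul_mem_left _ _ h) (I.mul_mem_right _ _ h)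
      have h2 : ((n+1 : ℕ) : ℂ) • B ^ n ∈ I := by
        have := I.sub_mem h1 (hcomm n)
        simpa using this
      have hc0 : ((n+1 : ℕ) : ℂ) ≠ 0 := Nat.cast_ne_zero.mpr (Nat.succ_ne_zero n)
      have h3 : B ^ n ∈ I := by
        have := smul_mem (((n+1 : ℕ) : ℂ))⁻¹ h2
        rwa [smul_smul, inv_mul_cancel₀ hc0, one_smul] at this
      exact ih h3
  -- hence q (B ^ n) > 0
  have hqpos : ∀ n : ℕ, 0 < q (B ^ n) := by
    intro n
    rcases lt_or_eq_of_le (q_nonneg (B ^ n)) with h | h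
    · exact h
    · exact absurd (SetLike.mem_coe.mp ((hIc.mem_iff_infDist_zero hIne).mpr h.symm)) (hpow n)
  -- the key inequality
  have key : ∀ n : ℕ, ((n+1 : ℕ) : ℝ) * q (B ^ n) ≤ 2 * ‖A'‖ * (‖B‖ * q (B ^ n)) := by
    intro n
    have hc0 : ((n+1 : ℕ) : ℂ) ≠ 0 := Nat.cast_ne_zero.mpr (Nat.succ_ne_zero n)
    have e1 : ((n+1 : ℕ) : ℝ) * q (B ^ n) ≤ q (((n+1 : ℕ) : ℂ) • B ^ n) := by
      calc ((n+1 : ℕ) : ℝ) * q (B ^ n) = ‖((n+1 : ℕ) : ℂ)‖ * q (B ^ n) := by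
            rw [Complex.norm_natCast]
        _ ≤ q (((n+1 : ℕ) : ℂ) • B ^ n) := q_smul_ge _ _ hc0
    have e2 : q (((n+1 : ℕ) : ℂ) • B ^ n) = q (A' * B ^ (n+1) - B ^ (n+1) * A') := by
      apply q_congr
      have := I.neg_mem (hcomm n)
      rwa [neg_sub] at this
    have e3 : q (A' * B ^ (n+1) - B ^ (n+1) * A')
        ≤ ‖A'‖ * q (B ^ (n+1)) + ‖A'‖ * q (B ^ (n+1)) := by
      calc q (A' * B ^ (n+1) - B ^ (n+1) * A')
          ≤ q (A' * B ^ (n+1)) + q (B ^ (n+1) * A') := q_sub _ _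
        _ ≤ ‖A'‖ * q (B ^ (n+1)) + ‖A'‖ * q (B ^ (n+1)) :=
            add_le_add (q_mul_left _ _) (q_mul_right _ _)
    have e4 : q (B ^ (n+1)) ≤ ‖B‖ * q (B ^ n) := by
      calc q (B ^ (n+1)) = q (B ^ n * B) := by rw [pow_succ]
        _ ≤ ‖B‖ * q (B ^ n) := q_mul_right _ _
    calc ((n+1 : ℕ) : ℝ) * q (B ^ n) ≤ q (((n+1 : ℕ) : ℂ) • B ^ n) := e1
      _ = q (A' * B ^ (n+1) - B ^ (n+1) * A') := e2
      _ ≤ ‖A'‖ * q (B ^ (n+1)) + ‖A'‖ * q (B ^ (n+1)) := e3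
      _ ≤ ‖A'‖ * (‖B‖ * q (B ^ n)) + ‖A'‖ * (‖B‖ * q (B ^ n)) := by
          have h5 := mul_le_mul_of_nonneg_left e4 (norm_nonneg A')
          exact add_le_add h5 h5
      _ = 2 * ‖A'‖ * (‖B‖ * q (B ^ n)) := by ring
  -- derive the contradiction
  obtain ⟨n, hn⟩ := exists_nat_gt (2 * ‖A'‖ * ‖B‖)
  have h1 := key n
  have hqn := hqpos n
  have h2 : ((n+1 : ℕ) : ℝ) ≤ 2 * ‖A'‖ * ‖B‖ :=
    le_of_mul_le_mul_right (by linarith) hqn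
  have h3 : ((n : ℕ) : ℝ) < ((n+1 : ℕ) : ℝ) := by exact_mod_cast Nat.lt_succ_self n
  linarith
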